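/- Let β, γ ∈ (0,1), c⁺ > 0 and c⁻ ≥ 0 satisfy (1−βγ)·c⁺ > c⁻. Let W : [0,∞) → ℝ be nondecreasing, let d ≥ 0, and let a be a real number with a ≥ (1−βγ)·c⁺ − c⁻. Then the function x ↦ a·x + β·W(γ·x + d) is strictly increasing on [0,∞). Consequently, if Φ is a pointwise minimum of finitely many functions of this form, then Φ is strictly increasing on [0,∞) and, for every x ≥ 0, the infimum of Φ over [x,∞) is attained uniquely at x (so the agent's optimal improvement action is zero). -/

import Mathlib

open Set

lemma branch_strict (β γ cplus cminus : ℝ)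
    (hβ : β ∈ Ioo (0:ℝ) 1) (hγ : γ ∈ Ioo (0:ℝ) 1)
    (himp : (1 - β * γ) * cplus > cminus)
    (W : ℝ → ℝ) (hW : MonotoneOn W (Ici 0)) (d : ℝ) (hd : 0 ≤ d)
    (a : ℝ) (ha : (1 - β * γ) * cplus - cminus ≤ a) :
    StrictMonoOn (fun x => a * x + β * W (γ * x + d)) (Ici 0) := by
  have ha0 : 0 < a := lt_of_lt_of_le (by linarith) ha
  intro x hx y hy hxy
  have hx0 : (0:ℝ) ≤ x := hx
  have hy0 : (0:ℝ) ≤ y := hy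
  have h1 : γ * x + d ∈ Ici (0:ℝ) := by
    have : 0 ≤ γ * x := mul_nonneg hγ.1.le hx0
    simp only [mem_Ici]; linarith
  have h2 : γ * y + d ∈ Ici (0:ℝ) := by
    have : 0 ≤ γ * y := mul_nonneg hγ.1.le hy0
    simp only [mem_Ici]; linarith
  have hW' : W (γ * x + d) ≤ W (γ * y + d) := by
    apply hW h1 h2
    have := mul_le_mul_of_nonneg_left hxy.le hγ.1.le
    linarith
  have hax : a * x < a * y := by nlinarith
  have := mul_le_mul_of_nonneg_left hW' hβ.1.le
  simp only
  linarith

theorem stmt_0 (β γ cplus cminus : ℝ)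
    (hβ : β ∈ Ioo (0:ℝ) 1) (hγ : γ ∈ Ioo (0:ℝ) 1)
    (hcp : 0 < cplus) (hcm : 0 ≤ cminus)
    (himp : (1 - β * γ) * cplus > cminus) :
    (∀ (W : ℝ → ℝ), MonotoneOn W (Ici 0) → ∀ d : ℝ, 0 ≤ d →
      ∀ a : ℝ, (1 - β * γ) * cplus - cminus ≤ a →
      StrictMonoOn (fun x => a * x + β * W (γ * x + d)) (Ici 0))
    ∧
    (∀ (ι : Type) (s : Finset ι) (hs : s.Nonempty)
        (A D : ι → ℝ) (Wf : ι → ℝ → ℝ),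
      (∀ i ∈ s, (1 - β * γ) * cplus - cminus ≤ A i) →
      (∀ i ∈ s, 0 ≤ D i) →
      (∀ i ∈ s, MonotoneOn (Wf i) (Ici 0)) →
      (StrictMonoOn (fun x => s.inf' hs (fun i => A i * x + β * Wf i (γ * x + D i))) (Ici 0)
       ∧ ∀ x : ℝ, 0 ≤ x →
          (IsLeast ((fun y => s.inf' hs (fun i => A i * y + β * Wf i (γ * y + D i))) '' Ici x)
            (s.inf' hs (fun i => A i * x + β * Wf i (γ * x + D i)))
          ∧ ∀ y ∈ Ici x,
              s.inf' hs (fun i => A i * y + β * Wf i (γ * y + D i)) =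
                s.inf' hs (fun i => A i * x + β * Wf i (γ * x + D i)) → y = x))) := by
  constructor
  · exact fun W hW d hd a ha => branch_strict β γ cplus cminus hβ hγ himp W hW d hd a ha
  · intro ι s hs A D Wf hA hD hW
    set Φ : ℝ → ℝ := fun x => s.inf' hs (fun i => A i * x + β * Wf i (γ * x + D i)) with hΦ
    have hstrict : StrictMonoOn Φ (Ici 0) := by
      intro x hx y hy hxy
      obtain ⟨j, hjs, hj⟩ := s.exists_mem_eq_inf' hs (fun i => A i * y + β * Wf i (γ * y + D i))
      have hle : Φ x ≤ A j * x + β * Wf j (γ * x + D j) :=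
        Finset.inf'_le _ hjs
      have hlt : A j * x + β * Wf j (γ * x + D j) < A j * y + β * Wf j (γ * y + D j) :=
        branch_strict β γ cplus cminus hβ hγ himp (Wf j) (hW j hjs) (D j) (hD j hjs)
          (A j) (hA j hjs) hx hy hxy
      calc Φ x ≤ _ := hle
        _ < A j * y + β * Wf j (γ * y + D j) := hlt
        _ = Φ y := hj.symm
    refine ⟨hstrict, fun x hx => ⟨⟨⟨x, self_mem_Ici, rfl⟩, ?_⟩, ?_⟩⟩
    · rintro _ ⟨y, hy, rfl⟩
      rcases eq_or_lt_of_le (mem_Ici.mp hy) with h | h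
      · exact le_of_eq (by rw [h])
      · exact (hstrict hx (le_trans hx (mem_Ici.mp hy)) h).le
    · intro y hy heq
      by_contra hne
      have h : x < y := lt_of_le_of_ne hy (Ne.symm hne)
      exact absurd heq (ne_of_gt (hstrict hx (le_trans hx hy) h))
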